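/- Let 0 < p ≤ q and let α ∈ (0, min(p, 1)). Then the elliptical spiral S_{p,q} is an α-Hölder arc: there exist a homeomorphism f from [0,1] onto S_{p,q} and H > 0 with |f(x) − f(y)| ≤ H|x − y|^α for all x, y ∈ [0,1]. -/

import Mathlib

/-- The parametrizing map `t ↦ t^{-p} cos t + i t^{-q} sin t` of the elliptical
spiral `S_{p,q}`. -/
noncomputable def ellipticalMap (p q : ℝ) : ℝ → ℂ :=
  fun t => (↑(t ^ (-p) * Real.cos t) : ℂ) + (↑(t ^ (-q) * Real.sin t) : ℂ) * Complex.I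

/-- The elliptical spiral `S_{p,q} = {t^{-p} cos t + i t^{-q} sin t : t ∈ [2π, ∞)} ∪ {0}`. -/
noncomputable def ellipticalSpiral (p q : ℝ) : Set ℂ :=
  ellipticalMap p q '' Set.Ici (2 * Real.pi) ∪ {0}

/-- `S` is an `α`-Hölder arc: there is a homeomorphism `f` from `[0,1]` onto `S`
(equivalently, a continuous injective surjection from the compact set `[0,1]`)
and `H > 0` with `|f x - f y| ≤ H |x - y| ^ α`. -/
def IsHolderArc (S : Set ℂ) (α : ℝ) : Prop :=
  ∃ f : ℝ → ℂ, Set.InjOn f (Set.Icc 0 1) ∧ f '' Set.Icc 0 1 = S ∧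
    ∃ H > 0, ∀ x ∈ Set.Icc (0:ℝ) 1, ∀ y ∈ Set.Icc (0:ℝ) 1,
      ‖f x - f y‖ ≤ H * |x - y| ^ α

open Real Set

section helpers
lemma em_norm_le {p q : ℝ} (hp : 0 < p) (hpq : p ≤ q) {t : ℝ} (ht : 1 ≤ t) :
    ‖ellipticalMap p q t‖ ≤ 2 * t ^ (-p) := by
  have h1 : ‖ellipticalMap p q t‖
      ≤ |t ^ (-p) * Real.cos t| + |t ^ (-q) * Real.sin t| := by
    refine (norm_add_le _ _).trans ?_
    simp only [Complex.norm_real, norm_mul, Complex.norm_I, mul_one, Real.norm_eq_abs, abs_mul, le_refl]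
  have h2 : |t ^ (-p) * Real.cos t| ≤ t ^ (-p) := by
    rw [abs_mul, abs_of_nonneg (rpow_nonneg (by linarith) _)]
    nlinarith [abs_cos_le_one t, rpow_nonneg (show (0:ℝ) ≤ t by linarith) (-p),
      abs_nonneg (Real.cos t)]
  have h3 : |t ^ (-q) * Real.sin t| ≤ t ^ (-q) := by
    rw [abs_mul, abs_of_nonneg (rpow_nonneg (by linarith) _)]
    nlinarith [abs_sin_le_one t, rpow_nonneg (show (0:ℝ) ≤ t by linarith) (-q),
      abs_nonneg (Real.sin t)]
  have h4 : t ^ (-q) ≤ t ^ (-p) := rpow_le_rpow_of_exponent_le ht (by linarith)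
  linarith

lemma em_hasDerivAt (p q : ℝ) {t : ℝ} (ht : 0 < t) :
    HasDerivAt (ellipticalMap p q)
      ((↑(-p * t ^ (-p - 1) * Real.cos t - t ^ (-p) * Real.sin t) : ℂ)
        + (↑(-q * t ^ (-q - 1) * Real.sin t + t ^ (-q) * Real.cos t) : ℂ) * Complex.I) t := by
  have hre : HasDerivAt (fun t : ℝ => t ^ (-p) * Real.cos t)
      (-p * t ^ (-p - 1) * Real.cos t - t ^ (-p) * Real.sin t) t := by
    have := (Real.hasDerivAt_rpow_const (p := -p) (Or.inl ht.ne')).mul (Real.hasDerivAt_cos t)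
    exact this.congr_deriv (by ring)
  have him : HasDerivAt (fun t : ℝ => t ^ (-q) * Real.sin t)
      (-q * t ^ (-q - 1) * Real.sin t + t ^ (-q) * Real.cos t) t := by
    have := (Real.hasDerivAt_rpow_const (p := -q) (Or.inl ht.ne')).mul (Real.hasDerivAt_sin t)
    exact this.congr_deriv (by ring)
  exact (hre.ofReal_comp).add ((him.ofReal_comp).mul_const Complex.I)

lemma em_lip {p q : ℝ} (hp : 0 < p) (hpq : p ≤ q) {a b : ℝ} (ha : 1 ≤ a) (hab : a ≤ b) :
    ‖ellipticalMap p q b - ellipticalMap p q a‖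
      ≤ ((2 + p + q) * a ^ (-p)) * (b - a) := by
  have key := Convex.norm_image_sub_le_of_norm_hasDerivWithin_le
    (f := ellipticalMap p q)
    (f' := fun t => (↑(-p * t ^ (-p - 1) * Real.cos t - t ^ (-p) * Real.sin t) : ℂ)
        + (↑(-q * t ^ (-q - 1) * Real.sin t + t ^ (-q) * Real.cos t) : ℂ) * Complex.I)
    (s := Icc a b) (C := (2 + p + q) * a ^ (-p))
    (fun x hx => (em_hasDerivAt p q (by have := hx.1; linarith)).hasDerivWithinAt)
    ?_ (convex_Icc a b) (left_mem_Icc.2 hab) (right_mem_Icc.2 hab)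
  · simpa [abs_of_nonneg (sub_nonneg.2 hab)] using key
  · intro z hz
    obtain ⟨hz1, hz2⟩ := hz
    have hz0 : (0:ℝ) < z := by linarith
    have hz1' : (1:ℝ) ≤ z := by linarith
    have e1 : z ^ (-p - 1) ≤ z ^ (-p) := rpow_le_rpow_of_exponent_le hz1' (by linarith)
    have e2 : z ^ (-q - 1) ≤ z ^ (-q) := rpow_le_rpow_of_exponent_le hz1' (by linarith)
    have e3 : z ^ (-q) ≤ z ^ (-p) := rpow_le_rpow_of_exponent_le hz1' (by linarith)
    have e4 : z ^ (-p) ≤ a ^ (-p) := by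
      rw [rpow_neg (by linarith : (0:ℝ) ≤ z), rpow_neg (by linarith : (0:ℝ) ≤ a)]
      exact inv_anti₀ (rpow_pos_of_pos (by linarith) p) (rpow_le_rpow (by linarith) hz1 hp.le)
    have hzp : (0:ℝ) ≤ z ^ (-p) := rpow_nonneg hz0.le _
    have hzq : (0:ℝ) ≤ z ^ (-q) := rpow_nonneg hz0.le _
    have hzp1 : (0:ℝ) ≤ z ^ (-p-1) := rpow_nonneg hz0.le _
    have hzq1 : (0:ℝ) ≤ z ^ (-q-1) := rpow_nonneg hz0.le _
    have b1 : |(-p * z ^ (-p - 1) * Real.cos z - z ^ (-p) * Real.sin z)| ≤ (1 + p) * z ^ (-p) := by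
      have := abs_cos_le_one z; have := abs_sin_le_one z
      have h1 : |(-p * z ^ (-p - 1) * Real.cos z)| ≤ p * z ^ (-p-1) := by
        rw [abs_mul, abs_mul, abs_neg, abs_of_pos hp, abs_of_nonneg hzp1]
        exact mul_le_of_le_one_right (mul_nonneg hp.le hzp1) (abs_cos_le_one z)
      have h2 : |z ^ (-p) * Real.sin z| ≤ z ^ (-p) := by
        rw [abs_mul, abs_of_nonneg hzp]
        exact mul_le_of_le_one_right hzp (abs_sin_le_one z)
      calc |(-p * z ^ (-p - 1) * Real.cos z - z ^ (-p) * Real.sin z)|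
          ≤ |(-p * z ^ (-p - 1) * Real.cos z)| + |z ^ (-p) * Real.sin z| := abs_sub _ _
        _ ≤ p * z ^ (-p-1) + z ^ (-p) := by linarith
        _ ≤ (1 + p) * z ^ (-p) := by nlinarith
    have b2 : |(-q * z ^ (-q - 1) * Real.sin z + z ^ (-q) * Real.cos z)| ≤ (1 + q) * z ^ (-p) := by
      have := abs_cos_le_one z; have := abs_sin_le_one z
      have h1 : |(-q * z ^ (-q - 1) * Real.sin z)| ≤ q * z ^ (-q-1) := by
        rw [abs_mul, abs_mul, abs_neg, abs_of_pos (hp.trans_le hpq), abs_of_nonneg hzq1]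
        exact mul_le_of_le_one_right (mul_nonneg (hp.trans_le hpq).le hzq1) (abs_sin_le_one z)
      have h2 : |z ^ (-q) * Real.cos z| ≤ z ^ (-q) := by
        rw [abs_mul, abs_of_nonneg hzq]
        exact mul_le_of_le_one_right hzq (abs_cos_le_one z)
      calc |(-q * z ^ (-q - 1) * Real.sin z + z ^ (-q) * Real.cos z)|
          ≤ |(-q * z ^ (-q - 1) * Real.sin z)| + |z ^ (-q) * Real.cos z| := abs_add_le _ _
        _ ≤ q * z ^ (-q-1) + z ^ (-q) := by linarith
        _ ≤ (1 + q) * z ^ (-p) := by nlinarith [hp.trans_le hpq]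
    calc ‖(↑(-p * z ^ (-p - 1) * Real.cos z - z ^ (-p) * Real.sin z) : ℂ)
        + (↑(-q * z ^ (-q - 1) * Real.sin z + z ^ (-q) * Real.cos z) : ℂ) * Complex.I‖
        ≤ |(-p * z ^ (-p - 1) * Real.cos z - z ^ (-p) * Real.sin z)|
          + |(-q * z ^ (-q - 1) * Real.sin z + z ^ (-q) * Real.cos z)| := by
          refine (norm_add_le _ _).trans ?_
          rw [norm_mul]
          simp only [Complex.norm_real, Complex.norm_I, mul_one, Real.norm_eq_abs, le_refl]
      _ ≤ (1 + p) * z ^ (-p) + (1 + q) * z ^ (-p) := by linarith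
      _ ≤ (2 + p + q) * a ^ (-p) := by nlinarith

lemma em_ne_zero {p q : ℝ} {t : ℝ} (ht : 0 < t) : ellipticalMap p q t ≠ 0 := by
  intro h
  rw [Complex.ext_iff] at h
  simp only [ellipticalMap, Complex.add_re, Complex.ofReal_re, Complex.mul_re, Complex.I_re,
    Complex.ofReal_im, Complex.I_im, Complex.add_im, Complex.mul_im, Complex.zero_re,
    Complex.zero_im, mul_zero, zero_mul, mul_one, sub_zero, add_zero, zero_add] at h
  obtain ⟨h1, h2⟩ := h
  have hp' : t ^ (-p) ≠ 0 := (rpow_pos_of_pos ht _).ne'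
  have hq' : t ^ (-q) ≠ 0 := (rpow_pos_of_pos ht _).ne'
  have hc : Real.cos t = 0 := by
    rcases mul_eq_zero.1 h1 with h | h
    · exact absurd h hp'
    · exact h
  have hs : Real.sin t = 0 := by
    rcases mul_eq_zero.1 h2 with h | h
    · exact absurd h hq'
    · exact h
  nlinarith [Real.sin_sq_add_cos_sq t]

set_option maxHeartbeats 1000000 in
lemma em_inj_aux {p q : ℝ} (hp : 0 < p) (hq : 0 < q) {t u : ℝ} (ht : 0 < t) (htu : t < u) :
    ellipticalMap p q t ≠ ellipticalMap p q u := by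
  intro h
  have hu : 0 < u := ht.trans htu
  rw [Complex.ext_iff] at h
  simp only [ellipticalMap, Complex.add_re, Complex.ofReal_re, Complex.mul_re, Complex.I_re,
    Complex.ofReal_im, Complex.I_im, Complex.add_im, Complex.mul_im, mul_zero, zero_mul,
    mul_one, sub_zero, add_zero, zero_add] at h
  obtain ⟨h1, h2⟩ := h
  have hct : Real.cos t = t ^ p * (t ^ (-p) * Real.cos t) := by
    rw [← mul_assoc, ← rpow_add ht]; simp
  have hcu : Real.cos u = u ^ p * (t ^ (-p) * Real.cos t) := by
    rw [h1, ← mul_assoc, ← rpow_add hu]; simp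
  have hst : Real.sin t = t ^ q * (t ^ (-q) * Real.sin t) := by
    rw [← mul_assoc, ← rpow_add ht]; simp
  have hsu : Real.sin u = u ^ q * (t ^ (-q) * Real.sin t) := by
    rw [h2, ← mul_assoc, ← rpow_add hu]; simp
  set A := t ^ (-p) * Real.cos t with hA
  set B := t ^ (-q) * Real.sin t with hB
  have e1 := Real.sin_sq_add_cos_sq t
  have e2 := Real.sin_sq_add_cos_sq u
  rw [hct, hst] at e1
  rw [hcu, hsu] at e2
  set tp := t ^ p with htp_def
  set up := u ^ p with hup_def
  set tq := t ^ q with htq_def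
  set uq := u ^ q with huq_def
  have hpp : tp < up := rpow_lt_rpow ht.le htu hp
  have hqq : tq < uq := rpow_lt_rpow ht.le htu hq
  have htp : (0:ℝ) < tp := rpow_pos_of_pos ht _
  have htq : (0:ℝ) < tq := rpow_pos_of_pos ht _
  clear_value A B tp up tq uq
  clear hct hcu hst hsu h1 h2
  have key : A ^ 2 * (up^2 - tp^2) + B ^ 2 * (uq^2 - tq^2) = 0 := by
    linear_combination e2 - e1
  have n1 : (0:ℝ) ≤ A ^ 2 * (up^2 - tp^2) :=
    mul_nonneg (sq_nonneg A) (by nlinarith)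
  have n2 : (0:ℝ) ≤ B ^ 2 * (uq^2 - tq^2) :=
    mul_nonneg (sq_nonneg B) (by nlinarith)
  have hA2 : A ^ 2 * (up^2 - tp^2) = 0 := by linarith
  have hB2 : B ^ 2 * (uq^2 - tq^2) = 0 := by linarith
  have hApos : (0:ℝ) < up^2 - tp^2 := by nlinarith
  have hBpos : (0:ℝ) < uq^2 - tq^2 := by nlinarith
  have hA0 : A ^ 2 = 0 := by
    by_contra hne
    have h1 : 0 < A ^ 2 := lt_of_le_of_ne (sq_nonneg A) (Ne.symm hne)
    nlinarith [mul_pos h1 hApos]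
  have hB0 : B ^ 2 = 0 := by
    by_contra hne
    have h1 : 0 < B ^ 2 := lt_of_le_of_ne (sq_nonneg B) (Ne.symm hne)
    nlinarith [mul_pos h1 hBpos]
  have ea : (tp * A) ^ 2 = tp ^ 2 * A ^ 2 := by ring
  have eb : (tq * B) ^ 2 = tq ^ 2 * B ^ 2 := by ring
  rw [ea, eb, hA0, hB0] at e1
  simp at e1


lemma em_inj {p q : ℝ} (hp : 0 < p) (hq : 0 < q) {t u : ℝ} (ht : 0 < t) (hu : 0 < u)
    (h : ellipticalMap p q t = ellipticalMap p q u) : t = u := by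
  rcases lt_trichotomy t u with h' | h' | h'
  · exact absurd h (em_inj_aux hp hq ht h')
  · exact h'
  · exact absurd h.symm (em_inj_aux hp hq hu h')

lemma rpow_mvt {s : ℝ} (hs : 0 < s) {y x : ℝ} (hy : 0 < y) (hyx : y ≤ x) :
    y ^ (-s) - x ^ (-s) ≤ (s * y ^ (-s - 1)) * (x - y) := by
  have hderiv : ∀ z ∈ Icc y x, HasDerivWithinAt (fun z : ℝ => z ^ (-s))
      (-s * z ^ (-s - 1)) (Icc y x) z := by
    intro z hz
    exact (Real.hasDerivAt_rpow_const (p := -s)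
      (Or.inl (lt_of_lt_of_le hy hz.1).ne')).hasDerivWithinAt
  have hbound : ∀ z ∈ Icc y x, ‖-s * z ^ (-s - 1)‖ ≤ s * y ^ (-s - 1) := by
    intro z hz
    have hz0 : 0 < z := lt_of_lt_of_le hy hz.1
    rw [Real.norm_eq_abs, abs_mul, abs_neg, abs_of_pos hs,
      abs_of_nonneg (rpow_nonneg hz0.le _)]
    have : z ^ (-s - 1) ≤ y ^ (-s - 1) := by
      rw [show -s - 1 = -(s+1) by ring, rpow_neg hz0.le, rpow_neg hy.le]
      exact inv_anti₀ (rpow_pos_of_pos hy _) (rpow_le_rpow hy.le hz.1 (by linarith))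
    nlinarith
  have key := Convex.norm_image_sub_le_of_norm_hasDerivWithin_le hderiv hbound
    (convex_Icc y x) (left_mem_Icc.2 hyx) (right_mem_Icc.2 hyx)
  have key' : |x ^ (-s) - y ^ (-s)| ≤ s * y ^ (-s - 1) * |x - y| := by simpa using key
  rw [abs_of_nonneg (sub_nonneg.2 hyx)] at key'
  calc y ^ (-s) - x ^ (-s) = -(x ^ (-s) - y ^ (-s)) := by ring
    _ ≤ |x ^ (-s) - y ^ (-s)| := neg_le_abs _
    _ ≤ s * y ^ (-s - 1) * (x - y) := key'

end helpers

set_option maxHeartbeats 2000000 in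
/-- For `0 < p ≤ q` and `0 < α < min(p, 1)`, the elliptical spiral `S_{p,q}` is an
`α`-Hölder arc. -/
theorem ellipticalSpiral_isHolderArc (p q α : ℝ) (hp : 0 < p) (hpq : p ≤ q)
    (hα0 : 0 < α) (hα1 : α < min p 1) :
    IsHolderArc (ellipticalSpiral p q) α := by
  have hq : 0 < q := hp.trans_le hpq
  have hαp : α < p := lt_of_lt_of_le hα1 (min_le_left _ _)
  have hα1' : α < 1 := lt_of_lt_of_le hα1 (min_le_right _ _)
  set s : ℝ := α / (p - α) with hs_def
  have hpα : 0 < p - α := by linarith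
  have hs : 0 < s := div_pos hα0 hpα
  have hps : p * s = (s + 1) * α := by
    rw [hs_def]; field_simp; try ring
  have hπ1 : (1:ℝ) ≤ 2 * π := by nlinarith [Real.pi_gt_three]
  have hπ0 : (0:ℝ) < 2 * π := by linarith
  have hxneg : ∀ x : ℝ, 0 < x → x ≤ 1 → 1 ≤ x ^ (-s) := fun x hx0 hx1 =>
    Real.one_le_rpow_of_pos_of_le_one_of_nonpos hx0 hx1 (by linarith)
  have htge : ∀ x : ℝ, 0 < x → x ≤ 1 → 2 * π ≤ 2 * π * x ^ (-s) := by
    intro x hx0 hx1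
    nlinarith [hxneg x hx0 hx1]
  have htpos : ∀ x : ℝ, 0 < x → x ≤ 1 → 0 < 2 * π * x ^ (-s) := fun x hx0 hx1 =>
    lt_of_lt_of_le hπ0 (htge x hx0 hx1)
  have htge1 : ∀ x : ℝ, 0 < x → x ≤ 1 → 1 ≤ 2 * π * x ^ (-s) := fun x hx0 hx1 =>
    le_trans hπ1 (htge x hx0 hx1)
  have hF0 : ellipticalMap p q (2 * π * (0:ℝ) ^ (-s)) = 0 := by
    rw [Real.zero_rpow (neg_ne_zero.2 hs.ne'), mul_zero]
    have h2 : (0:ℝ) ^ (-p) = 0 := Real.zero_rpow (neg_ne_zero.2 hp.ne')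
    have h3 : (0:ℝ) ^ (-q) = 0 := Real.zero_rpow (neg_ne_zero.2 hq.ne')
    simp [ellipticalMap, h2, h3]
  have htpow : ∀ x : ℝ, 0 < x → (2 * π * x ^ (-s)) ^ (-p) = (2*π) ^ (-p) * x ^ (p*s) := by
    intro x hx0
    rw [Real.mul_rpow hπ0.le (rpow_nonneg hx0.le _), ← Real.rpow_mul hx0.le]
    congr 1
    ring
  have hFnorm : ∀ x : ℝ, 0 ≤ x → x ≤ 1 →
      ‖ellipticalMap p q (2 * π * x ^ (-s))‖ ≤ 2 * ((2*π)^(-p) * x ^ (p*s)) := by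
    intro x hx0 hx1
    rcases eq_or_lt_of_le hx0 with h | h
    · rw [← h, hF0, Real.zero_rpow (mul_pos hp hs).ne']
      simp
    · have := em_norm_le hp hpq (htge1 x h hx1)
      rw [htpow x h] at this
      exact this
  refine ⟨fun x => ellipticalMap p q (2 * π * x ^ (-s)), ?_, ?_, ?_⟩
  · -- Injectivity
    rintro x ⟨hx0, hx1⟩ y ⟨hy0, hy1⟩ hxy
    simp only at hxy
    rcases eq_or_lt_of_le hx0 with hx' | hx' <;> rcases eq_or_lt_of_le hy0 with hy' | hy'
    · rw [← hx', ← hy']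
    · exfalso
      have h0 : ellipticalMap p q (2*π*y^(-s)) = 0 := by rw [← hxy, ← hx', hF0]
      exact em_ne_zero (htpos y hy' hy1) h0
    · exfalso
      have h0 : ellipticalMap p q (2*π*x^(-s)) = 0 := by rw [hxy, ← hy', hF0]
      exact em_ne_zero (htpos x hx' hx1) h0
    · have ht := em_inj hp hq (htpos x hx' hx1) (htpos y hy' hy1) hxy
      have h1 : x ^ (-s) = y ^ (-s) := mul_left_cancel₀ hπ0.ne' ht
      exact Real.rpow_left_injOn (neg_ne_zero.2 hs.ne') hx0 hy0 h1
  · -- Image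
    apply Set.Subset.antisymm
    · rintro z ⟨x, ⟨hx0, hx1⟩, rfl⟩
      rcases eq_or_lt_of_le hx0 with h | h
      · subst h
        exact Or.inr (by simpa using hF0)
      · exact Or.inl ⟨2*π*x^(-s), htge x h hx1, rfl⟩
    · rintro z (⟨t, ht, rfl⟩ | hz)
      · have ht0 : 0 < t := lt_of_lt_of_le hπ0 ht
        have hdiv : 0 < 2*π/t := div_pos hπ0 ht0
        have hdiv1 : 2*π/t ≤ 1 := (div_le_one ht0).2 ht
        refine ⟨(2*π/t)^(s⁻¹), ⟨(rpow_pos_of_pos hdiv _).le,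
          Real.rpow_le_one hdiv.le hdiv1 (inv_nonneg.2 hs.le)⟩, ?_⟩
        have e : ((2*π/t)^(s⁻¹))^(-s) = (2*π/t)⁻¹ := by
          rw [← Real.rpow_mul hdiv.le, show s⁻¹ * -s = -1 by field_simp,
            Real.rpow_neg_one]
        simp only [e]
        congr 1
        field_simp
      · refine ⟨0, ⟨le_refl 0, zero_le_one⟩, ?_⟩
        simp only [mem_singleton_iff] at hz
        show ellipticalMap p q (2 * π * (0:ℝ) ^ (-s)) = z
        rw [hF0, hz]
  · -- Hölder estimate
    refine ⟨4 * (2*π)^(-p) * 2^((s+1)*α) + (2+p+q) * (2*π)^(-p) * (2*π) * s * 2^((s+1)*α),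
      by positivity, ?_⟩
    set H := 4 * (2*π)^(-p) * 2^((s+1)*α) + (2+p+q) * (2*π)^(-p) * (2*π) * s * 2^((s+1)*α)
      with hH
    have hC1 : (0:ℝ) < 4 * (2*π)^(-p) * 2^((s+1)*α) := by positivity
    have hC2 : (0:ℝ) < (2+p+q) * (2*π)^(-p) * (2*π) * s * 2^((s+1)*α) := by positivity
    have main : ∀ x ∈ Icc (0:ℝ) 1, ∀ y ∈ Icc (0:ℝ) 1, y ≤ x →
        ‖ellipticalMap p q (2 * π * x ^ (-s))
          - ellipticalMap p q (2 * π * y ^ (-s))‖ ≤ H * |x - y| ^ α := by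
      rintro x ⟨hx0, hx1⟩ y ⟨hy0, hy1⟩ hyx
      rcases eq_or_lt_of_le hyx with h | h
      · rw [h]
        simp [Real.zero_rpow hα0.ne']
      have hx0' : 0 < x := lt_of_le_of_lt hy0 h
      have hd : 0 < x - y := by linarith
      rw [abs_of_pos hd]
      set d := x - y with hd_def
      have hxs1 : x ^ (s+1) ≤ x := by
        calc x ^ (s+1) ≤ x ^ (1:ℝ) := rpow_le_rpow_of_exponent_ge hx0' hx1 (by linarith)
          _ = x := rpow_one x
      rcases le_or_gt (y ^ (s+1)) d with hcase | hcase
      · -- Case A : far apart, use the diameter bound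
        have claim : x ^ (s+1) ≤ 2 ^ (s+1) * d := by
          rcases le_or_gt (x/2) y with h2 | h2
          · have e1 : (x/2) ^ (s+1) ≤ y ^ (s+1) :=
              rpow_le_rpow (by positivity) h2 (by linarith)
            have e2 : x ^ (s+1) = 2 ^ (s+1) * (x/2) ^ (s+1) := by
              rw [← Real.mul_rpow (by norm_num) (by positivity)]
              congr 1
              ring
            rw [e2]
            have : (0:ℝ) ≤ 2 ^ (s+1) := rpow_nonneg (by norm_num) _
            nlinarith
          · have e1 : x < 2 * d := by rw [hd_def]; linarith
            have e2 : (2:ℝ) ≤ 2 ^ (s+1) := by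
              calc (2:ℝ) = 2 ^ (1:ℝ) := (rpow_one 2).symm
                _ ≤ 2 ^ (s+1) := rpow_le_rpow_of_exponent_le one_le_two (by linarith)
            calc x ^ (s+1) ≤ x := hxs1
              _ ≤ 2*d := e1.le
              _ ≤ 2^(s+1)*d := by nlinarith
        have xps_le : x ^ (p*s) ≤ 2 ^ ((s+1)*α) * d ^ α := by
          have e0 : x ^ (p*s) = (x ^ (s+1)) ^ α := by
            rw [hps, Real.rpow_mul hx0'.le]
          rw [e0]
          calc (x^(s+1))^α ≤ (2^(s+1) * d)^α :=
              rpow_le_rpow (rpow_nonneg hx0'.le _) claim hα0.le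
            _ = 2^((s+1)*α) * d^α := by
              rw [Real.mul_rpow (rpow_nonneg (by norm_num) _) hd.le,
                ← Real.rpow_mul (by norm_num : (0:ℝ) ≤ 2)]
        have tri : ‖ellipticalMap p q (2 * π * x ^ (-s))
            - ellipticalMap p q (2 * π * y ^ (-s))‖
            ≤ ‖ellipticalMap p q (2 * π * x ^ (-s))‖
              + ‖ellipticalMap p q (2 * π * y ^ (-s))‖ := by
          exact norm_sub_le _ _
        have hyps : y ^ (p*s) ≤ x ^ (p*s) := rpow_le_rpow hy0 hyx (by positivity)
        have hP : (0:ℝ) < (2*π)^(-p) := rpow_pos_of_pos hπ0 _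
        have hda : (0:ℝ) ≤ d ^ α := rpow_nonneg hd.le _
        calc ‖ellipticalMap p q (2 * π * x ^ (-s))
              - ellipticalMap p q (2 * π * y ^ (-s))‖
            ≤ ‖ellipticalMap p q (2 * π * x ^ (-s))‖
              + ‖ellipticalMap p q (2 * π * y ^ (-s))‖ := tri
          _ ≤ 2 * ((2*π)^(-p) * x ^ (p*s)) + 2 * ((2*π)^(-p) * y ^ (p*s)) :=
              add_le_add (hFnorm x hx0 hx1) (hFnorm y hy0 hy1)
          _ ≤ 4 * (2*π)^(-p) * x ^ (p*s) := by
              nlinarith [mul_le_mul_of_nonneg_left hyps hP.le]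
          _ ≤ 4 * (2*π)^(-p) * (2 ^ ((s+1)*α) * d ^ α) := by
              exact mul_le_mul_of_nonneg_left xps_le (by positivity)
          _ ≤ H * d ^ α := by rw [hH]; nlinarith [mul_nonneg hC2.le hda]
      · -- Case B : close together, use the Lipschitz bound
        have hy0' : 0 < y := by
          rcases eq_or_lt_of_le hy0 with h' | h'
          · exfalso
            rw [← h', Real.zero_rpow (ne_of_gt (by linarith : (0:ℝ) < s+1))] at hcase
            linarith
          · exact h'
        have hys1 : y ^ (s+1) ≤ y := by
          calc y ^ (s+1) ≤ y ^ (1:ℝ) := rpow_le_rpow_of_exponent_ge hy0' hy1 (by linarith)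
            _ = y := rpow_one y
        have hxy2 : x ≤ 2 * y := by rw [hd_def] at hcase; linarith
        have hmono : x ^ (-s) ≤ y ^ (-s) := by
          rw [Real.rpow_neg hx0'.le, Real.rpow_neg hy0'.le]
          exact inv_anti₀ (rpow_pos_of_pos hy0' s) (rpow_le_rpow hy0'.le hyx hs.le)
        have htxy : 2 * π * x ^ (-s) ≤ 2 * π * y ^ (-s) :=
          mul_le_mul_of_nonneg_left hmono hπ0.le
        have lip := em_lip hp hpq (htge1 x hx0' hx1) htxy
        have flip : ‖ellipticalMap p q (2 * π * x ^ (-s))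
            - ellipticalMap p q (2 * π * y ^ (-s))‖
            = ‖ellipticalMap p q (2 * π * y ^ (-s))
              - ellipticalMap p q (2 * π * x ^ (-s))‖ := norm_sub_rev _ _
        have hT : 2 * π * y ^ (-s) - 2 * π * x ^ (-s) ≤ 2*π*(s * y^(-s-1)) * d := by
          rw [hd_def]
          have h' := mul_le_mul_of_nonneg_left (rpow_mvt hs hy0' hyx) hπ0.le
          nlinarith [h']
        have hD : d ≤ d^α * y^((s+1)*(1-α)) := by
          have e1 : d = d^α * d^(1-α) := by
            rw [← Real.rpow_add hd]
            norm_num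
          have e2 : d^(1-α) ≤ (y^(s+1))^(1-α) :=
            rpow_le_rpow hd.le hcase.le (by linarith)
          have e3 : (y^(s+1))^(1-α) = y^((s+1)*(1-α)) := (Real.rpow_mul hy0'.le _ _).symm
          calc d = d^α * d^(1-α) := e1
            _ ≤ d^α * (y^(s+1))^(1-α) :=
                mul_le_mul_of_nonneg_left e2 (rpow_nonneg hd.le _)
            _ = d^α * y^((s+1)*(1-α)) := by rw [e3]
        have hXle : x ^ (p*s) ≤ 2^(p*s) * y^(p*s) := by
          calc x ^ (p*s) ≤ (2*y) ^ (p*s) := rpow_le_rpow hx0'.le hxy2 (by positivity)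
            _ = 2^(p*s) * y^(p*s) := Real.mul_rpow (by norm_num) hy0'.le
        have collect : y^(p*s) * y^(-s-1) * y^((s+1)*(1-α)) = 1 := by
          rw [← Real.rpow_add hy0', ← Real.rpow_add hy0',
            show p*s + (-s-1) + (s+1)*(1-α) = 0 by linear_combination hps, rpow_zero]
        have h2ps : (2:ℝ)^(p*s) = 2^((s+1)*α) := by rw [hps]
        have hP : (0:ℝ) < (2*π)^(-p) := rpow_pos_of_pos hπ0 _
        have hY1 : (0:ℝ) ≤ y^(p*s) := rpow_nonneg hy0'.le _
        have hY2 : (0:ℝ) ≤ y^(-s-1) := rpow_nonneg hy0'.le _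
        have hY3 : (0:ℝ) ≤ y^((s+1)*(1-α)) := rpow_nonneg hy0'.le _
        have hda : (0:ℝ) ≤ d ^ α := rpow_nonneg hd.le _
        have hX : (0:ℝ) ≤ x^(p*s) := rpow_nonneg hx0'.le _
        rw [flip]
        calc ‖ellipticalMap p q (2 * π * y ^ (-s))
              - ellipticalMap p q (2 * π * x ^ (-s))‖
            ≤ ((2 + p + q) * (2 * π * x ^ (-s)) ^ (-p))
              * (2 * π * y ^ (-s) - 2 * π * x ^ (-s)) := lip
          _ = ((2 + p + q) * ((2*π)^(-p) * x^(p*s)))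
              * (2 * π * y ^ (-s) - 2 * π * x ^ (-s)) := by rw [htpow x hx0']
          _ ≤ ((2 + p + q) * ((2*π)^(-p) * x^(p*s))) * (2*π*(s * y^(-s-1)) * d) := by
              apply mul_le_mul_of_nonneg_left hT
              positivity
          _ ≤ ((2 + p + q) * ((2*π)^(-p) * (2^(p*s) * y^(p*s))))
              * (2*π*(s * y^(-s-1)) * d) := by
              have hnn : (0:ℝ) ≤ 2*π*(s * y^(-s-1)) * d := by positivity
              have hmul := mul_le_mul_of_nonneg_left
                (mul_le_mul_of_nonneg_left hXle hP.le) (by linarith : (0:ℝ) ≤ 2+p+q)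
              exact mul_le_mul_of_nonneg_right hmul hnn
          _ ≤ ((2 + p + q) * ((2*π)^(-p) * (2^(p*s) * y^(p*s))))
              * (2*π*(s * y^(-s-1)) * (d^α * y^((s+1)*(1-α)))) := by
              exact mul_le_mul_of_nonneg_left
                (mul_le_mul_of_nonneg_left hD (by positivity)) (by positivity)
          _ = ((2+p+q) * (2*π)^(-p) * (2*π) * s * 2^(p*s)) * d^α
              * (y^(p*s) * y^(-s-1) * y^((s+1)*(1-α))) := by ring
          _ = ((2+p+q) * (2*π)^(-p) * (2*π) * s * 2^((s+1)*α)) * d^α := by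
              rw [collect, h2ps, mul_one]
          _ ≤ H * d ^ α := by rw [hH]; nlinarith [mul_nonneg hC1.le hda]
    intro x hx y hy
    rcases le_total y x with h | h
    · exact main x hx y hy h
    · rw [norm_sub_rev, abs_sub_comm]
      exact main y hy x hx h
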